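/- For all natural numbers n ≥ r, L_{n−r}·L_{n+r} = (a/b)^{(−1)^n·ε(r)}·L_n², where the exponent is an integer power of the nonzero real a/b and ε(r) = 1 if r is odd, 0 if r is even. -/

import Mathlib

private def eps (k : ℕ) : ℤ := if Odd k then 1 else 0

private lemma odd_of {k : ℕ} (h : k % 2 = 1) : Odd k := Nat.odd_iff.mpr h
private lemma even_of {k : ℕ} (h : k % 2 = 0) : Even k := Nat.even_iff.mpr h
private lemma not_odd_of {k : ℕ} (h : k % 2 = 0) : ¬ Odd k := by
  rw [Nat.odd_iff]; omega

private lemma eps_even {k : ℕ} (h : Even k) : eps k = 0 := by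
  simp [eps, Nat.not_odd_iff_even.mpr h]

private lemma eps_odd {k : ℕ} (h : Odd k) : eps k = 1 := by
  simp [eps, h]

section
variable (a b : ℝ) (ha : a ≠ 0) (hb : b ≠ 0)
  (L : ℕ → Matrix (Fin 2) (Fin 2) ℝ) (hL0 : L 0 = !![a, 2; 2*a/b, -a])
  (hL1 : L 1 = !![a^2 + 2*a/b, a; a^2/b, 2*a/b])
  (hL : ∀ n : ℕ, L (n + 2) = if Odd (n + 2) then a • L (n + 1) + L n else b • L (n + 1) + L n)

include hb hL0 hL1 in
private lemma base_comm : L 1 * L 0 = L 0 * L 1 := by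
  ext i j
  fin_cases i <;> fin_cases j <;>
    simp [hL0, hL1, Matrix.mul_apply, Fin.sum_univ_two] <;> field_simp <;> ring

include hb hL0 hL1 in
private lemma base_sq : L 1 * L 1 = a • (L 0 * L 1) + (a/b) • (L 0 * L 0) := by
  ext i j
  fin_cases i <;> fin_cases j <;>
    simp [hL0, hL1, Matrix.mul_apply, Fin.sum_univ_two] <;> field_simp <;> ring

include hb hL0 hL1 hL in
private lemma lem1 : ∀ n : ℕ, L 1 * L n = (a/b) ^ (eps n) • (L 0 * L (n+1)) := by
  intro n
  induction n using Nat.twoStepInduction with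
  | zero =>
    rw [eps_even (Even.zero), zpow_zero, one_smul]
    exact base_comm a b hb L hL0 hL1
  | one =>
    have h2 : L 2 = b • L 1 + L 0 := by
      have := hL 0
      simp [Nat.odd_iff] at this
      exact this
    rw [eps_odd (by decide), zpow_one, h2, mul_add, Matrix.mul_smul,
      base_sq a b hb L hL0 hL1]
    match_scalars <;> field_simp <;> ring
  | more n IH1 IH2 =>
    have r2 := hL n
    have r3 := hL (n+1)
    rw [show n+1+2 = n+3 from rfl, show n+1+1 = n+2 from rfl] at r3
    rcases Nat.even_or_odd n with hn | hn
    · rw [Nat.even_iff] at hn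
      rw [if_neg (not_odd_of (by omega))] at r2
      rw [if_pos (odd_of (by omega))] at r3
      rw [r2, mul_add, Matrix.mul_smul, IH1, IH2, r3, mul_add, Matrix.mul_smul,
        eps_even (even_of hn), eps_odd (odd_of (by omega)),
        eps_even (even_of (by omega) : Even (n+2))]
      match_scalars <;> field_simp
    · rw [Nat.odd_iff] at hn
      rw [if_pos (odd_of (by omega))] at r2
      rw [if_neg (not_odd_of (by omega))] at r3
      rw [r2, mul_add, Matrix.mul_smul, IH1, IH2, r3, mul_add, Matrix.mul_smul,
        eps_odd (odd_of hn), eps_even (even_of (by omega) : Even (n+1)),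
        eps_odd (odd_of (by omega) : Odd (n+2))]
      match_scalars <;> field_simp <;> ring

include hb hL0 hL1 hL in
private lemma lem2 : ∀ m n : ℕ, L m * L n = (a/b) ^ (eps m * eps n) • (L 0 * L (m+n)) := by
  intro m
  induction m using Nat.twoStepInduction with
  | zero => intro n; rw [eps_even Even.zero, zero_mul, zpow_zero, one_smul, zero_add]
  | one =>
    intro n
    rw [eps_odd (by decide), one_mul, show (1:ℕ)+n = n+1 from by omega]
    exact lem1 a b hb L hL0 hL1 hL n
  | more m IH1 IH2 =>
    intro n
    have r2 := hL m
    have IH1' := IH1 n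
    have IH2' := IH2 n
    rw [show m+1+n = m+n+1 from by omega] at IH2'
    have r3 := hL (m+n)
    rw [show m+n+2 = m+2+n from by omega] at r3
    rcases Nat.even_or_odd m with hm | hm <;> rcases Nat.even_or_odd n with hn | hn <;>
      [rw [Nat.even_iff] at hm; rw [Nat.even_iff] at hm;
       rw [Nat.odd_iff] at hm; rw [Nat.odd_iff] at hm] <;>
      [rw [Nat.even_iff] at hn; rw [Nat.odd_iff] at hn;
       rw [Nat.even_iff] at hn; rw [Nat.odd_iff] at hn]
    · rw [if_neg (not_odd_of (by omega))] at r2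
      rw [if_neg (not_odd_of (by omega))] at r3
      rw [r2, add_mul, Matrix.smul_mul, IH1', IH2', r3, mul_add, Matrix.mul_smul,
        eps_even (even_of hm), eps_odd (odd_of (by omega) : Odd (m+1)),
        eps_even (even_of (by omega) : Even (m+2)), eps_even (even_of hn)]
      match_scalars <;> simp only [mul_zero, mul_one, zero_mul, one_mul, zpow_zero, zpow_one] <;> field_simp
    · rw [if_neg (not_odd_of (by omega))] at r2
      rw [if_pos (odd_of (by omega))] at r3
      rw [r2, add_mul, Matrix.smul_mul, IH1', IH2', r3, mul_add, Matrix.mul_smul,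
        eps_even (even_of hm), eps_odd (odd_of (by omega) : Odd (m+1)),
        eps_even (even_of (by omega) : Even (m+2)), eps_odd (odd_of hn)]
      match_scalars <;> simp only [mul_zero, mul_one, zero_mul, one_mul, zpow_zero, zpow_one] <;> field_simp <;> ring
    · rw [if_pos (odd_of (by omega))] at r2
      rw [if_pos (odd_of (by omega))] at r3
      rw [r2, add_mul, Matrix.smul_mul, IH1', IH2', r3, mul_add, Matrix.mul_smul,
        eps_odd (odd_of hm), eps_even (even_of (by omega) : Even (m+1)),
        eps_odd (odd_of (by omega) : Odd (m+2)), eps_even (even_of hn)]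
      match_scalars <;> simp only [mul_zero, mul_one, zero_mul, one_mul, zpow_zero, zpow_one] <;> field_simp
    · rw [if_pos (odd_of (by omega))] at r2
      rw [if_neg (not_odd_of (by omega))] at r3
      rw [r2, add_mul, Matrix.smul_mul, IH1', IH2', r3, mul_add, Matrix.mul_smul,
        eps_odd (odd_of hm), eps_even (even_of (by omega) : Even (m+1)),
        eps_odd (odd_of (by omega) : Odd (m+2)), eps_odd (odd_of hn)]
      match_scalars <;> simp only [mul_zero, mul_one, zero_mul, one_mul, zpow_zero, zpow_one] <;> field_simp <;> ring

end

theorem stmt_18 (a b : ℝ) (ha : a ≠ 0) (hb : b ≠ 0)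
  (L : ℕ → Matrix (Fin 2) (Fin 2) ℝ) (hL0 : L 0 = !![a, 2; 2*a/b, -a])
  (hL1 : L 1 = !![a^2 + 2*a/b, a; a^2/b, 2*a/b])
  (hL : ∀ n : ℕ, L (n + 2) = if Odd (n + 2) then a • L (n + 1) + L n else b • L (n + 1) + L n) :
    ∀ n r : ℕ, r ≤ n → L (n - r) * L (n + r) = ((a/b) ^ ((-1 : ℤ) ^ n * (if Odd r then 1 else 0))) • (L n) ^ 2 := by
  intro n r hr
  have hq : (a/b : ℝ) ≠ 0 := div_ne_zero ha hb
  have k1 := lem2 a b hb L hL0 hL1 hL (n-r) (n+r)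
  have k2 := lem2 a b hb L hL0 hL1 hL n n
  have hsum : n - r + (n + r) = n + n := by omega
  rw [hsum] at k1
  have key : eps (n-r) * eps (n+r) = (-1 : ℤ)^n * eps r + eps n * eps n := by
    rcases Nat.even_or_odd n with hn | hn <;> rcases Nat.even_or_odd r with hrr | hrr
    · rw [Nat.even_iff] at hn hrr
      rw [eps_even (even_of hn), eps_even (even_of hrr),
        eps_even (even_of (by omega) : Even (n-r)),
        eps_even (even_of (by omega) : Even (n+r))]
      ring
    · rw [Nat.even_iff] at hn; rw [Nat.odd_iff] at hrr
      rw [eps_even (even_of hn), eps_odd (odd_of hrr), (even_of hn).neg_one_pow,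
        eps_odd (odd_of (by omega) : Odd (n-r)),
        eps_odd (odd_of (by omega) : Odd (n+r))]
      ring
    · rw [Nat.odd_iff] at hn; rw [Nat.even_iff] at hrr
      rw [eps_odd (odd_of hn), eps_even (even_of hrr), (odd_of hn).neg_one_pow,
        eps_odd (odd_of (by omega) : Odd (n-r)),
        eps_odd (odd_of (by omega) : Odd (n+r))]
      ring
    · rw [Nat.odd_iff] at hn hrr
      rw [eps_odd (odd_of hn), eps_odd (odd_of hrr), (odd_of hn).neg_one_pow,
        eps_even (even_of (by omega) : Even (n-r)),
        eps_even (even_of (by omega) : Even (n+r))]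
      ring
  have hifr : (if Odd r then (1:ℤ) else 0) = eps r := rfl
  rw [k1, key, zpow_add₀ hq, mul_smul, ← k2, hifr, sq]
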